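/- Without assuming any external validity, under experimental internal validity, latent unconfounding, consistency and strict overlap, the bias of the data-combination formula for the treated arm admits the decomposition E[Y2(1) | G=1] − Σ_{x} P(X=x | G=1) Σ_{y} P(Y1=y | W=1, X=x, G=0) E[Y2 | Y1=y, W=1, X=x, G=1] = Σ_{x} P(X=x | G=1) Σ_{y} ( P(Y1(1)=y | X=x, G=1) − P(Y1(1)=y | X=x, G=0) ) · E[Y2(1) | Y1(1)=y, X=x, G=1]; in particular the bias vanishes whenever P(Y1(1)=y | X=x, G=1) = P(Y1(1)=y | X=x, G=0) for all y and all x in the support of X given G=1. -/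

import Mathlib

open MeasureTheory ProbabilityTheory

/-- Conditional probability `P(A | B)` as a real number. -/
noncomputable def cP {Ω : Type*} [MeasurableSpace Ω] (P : Measure Ω) (A B : Set Ω) : ℝ :=
  ((P[|B]) A).toReal

/-- Conditional expectation `E[Y | B]` (expectation under the conditional measure). -/
noncomputable def cE {Ω : Type*} [MeasurableSpace Ω] (P : Measure Ω) (Y : Ω → ℝ) (B : Set Ω) :
    ℝ :=
  ∫ ω, Y ω ∂(P[|B])


lemma cP_eq' {Ω : Type*} [MeasurableSpace Ω] (P : Measure Ω) [IsFiniteMeasure P]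
    {A B : Set Ω} (hB : MeasurableSet B) :
    ((P[|B]) A).toReal = (P (B ∩ A)).toReal / (P B).toReal := by
  rw [cond_apply hB, ENNReal.toReal_mul, ENNReal.toReal_inv]
  ring

lemma cE_eq' {Ω : Type*} [MeasurableSpace Ω] (P : Measure Ω) (f : Ω → ℝ) (B : Set Ω) :
    (∫ ω, f ω ∂(P[|B])) = (P B).toReal⁻¹ * ∫ ω in B, f ω ∂P := by
  rw [ProbabilityTheory.cond, integral_smul_measure, ENNReal.toReal_inv, smul_eq_mul]

lemma integral_partition {Ω ι : Type*} [MeasurableSpace Ω] [Fintype ι]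
    (P : Measure Ω) (Z : Ω → ι)
    (hZ : ∀ i : ι, MeasurableSet {ω | Z ω = i}) {B : Set Ω} (hB : MeasurableSet B)
    {f : Ω → ℝ} (hf : Integrable f P) :
    ∫ ω in B, f ω ∂P = ∑ i : ι, ∫ ω in {ω | Z ω = i} ∩ B, f ω ∂P := by
  have hU : B = ⋃ i ∈ Finset.univ, ({ω | Z ω = i} ∩ B) := by
    ext ω; simp
  rw [← MeasureTheory.integral_biUnion_finset Finset.univ
    (fun i _ => (hZ i).inter hB)
    (fun i _ j _ hij => by
      refine Set.disjoint_left.2 ?_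
      rintro ω ⟨hi, _⟩ ⟨hj, _⟩
      exact hij ((hi : Z ω = i).symm.trans hj))
    (fun i _ => hf.integrableOn)]
  rw [← hU]

lemma frac_helper {a b c d : ℝ} (hb : b ≠ 0) (hc : c ≠ 0)
    (h : b⁻¹ * a = (b⁻¹ * c) * (b⁻¹ * d)) : a / c = d / b := by
  field_simp at h ⊢
  have key : (b * a) * b = (c * d) * b := by rw [h]
  exact mul_right_cancel₀ hb key

lemma cond_setIntegral_indep {Ω : Type*} [MeasurableSpace Ω] (P : Measure Ω)
    [IsProbabilityMeasure P]
    {B1 : Set Ω} (hB1 : MeasurableSet B1) (hB1pos : P B1 ≠ 0)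
    {W : Ω → Bool} (hW : Measurable W) {f : Ω → ℝ} (hf : Measurable f)
    (hWpos : P (B1 ∩ {ω | W ω = true}) ≠ 0)
    (hind : IndepFun W f (P[|B1])) :
    (∫ ω in {ω | W ω = true} ∩ B1, f ω ∂P) / (P ({ω | W ω = true} ∩ B1)).toReal
      = (∫ ω in B1, f ω ∂P) / (P B1).toReal := by
  set SW : Set Ω := {ω | W ω = true} with hSW
  have hSWm : MeasurableSet SW := hW (measurableSet_singleton true)
  set ind : Ω → ℝ := fun ω => if W ω = true then 1 else 0 with hind_def
  have hφ : Measurable (fun b : Bool => if b = true then (1:ℝ) else 0) := measurable_from_top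
  have hindI : IndepFun ind f (P[|B1]) := hind.comp hφ measurable_id
  have hmul := hindI.integral_mul_eq_mul_integral ((hφ.comp hW).aestronglyMeasurable) hf.aestronglyMeasurable
  have h1 : (ind * f) = Set.indicator SW f := by
    funext ω
    by_cases h : W ω = true <;>
      simp [hind_def, hSW, Set.indicator, h]
  have h2 : ind = Set.indicator SW 1 := by
    funext ω
    by_cases h : W ω = true <;>
      simp [hind_def, hSW, Set.indicator, h]
  rw [h1, h2, integral_indicator hSWm, integral_indicator_one hSWm] at hmul
  -- rewrite conditional measure quantities in terms of P
  have e1 : ∫ ω in SW, f ω ∂(P[|B1]) = (P B1).toReal⁻¹ * ∫ ω in SW ∩ B1, f ω ∂P := by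
    rw [ProbabilityTheory.cond, Measure.restrict_smul, Measure.restrict_restrict hSWm,
      integral_smul_measure, ENNReal.toReal_inv, smul_eq_mul]
  have e2 : ∫ ω, f ω ∂(P[|B1]) = (P B1).toReal⁻¹ * ∫ ω in B1, f ω ∂P := cE_eq' P f B1
  have e3 : (P[|B1]).real SW = (P (B1 ∩ SW)).toReal / (P B1).toReal := cP_eq' P hB1
  rw [e1, e2, e3] at hmul
  have hb : (P B1).toReal ≠ 0 := by
    simp [ENNReal.toReal_ne_zero, hB1pos, measure_ne_top P B1]
  have hc : (P (B1 ∩ SW)).toReal ≠ 0 := by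
    simp [ENNReal.toReal_ne_zero, hWpos, measure_ne_top P _]
  have hcomm : SW ∩ B1 = B1 ∩ SW := Set.inter_comm _ _
  rw [hcomm]
  rw [hcomm] at hmul
  field_simp at hmul ⊢
  have key : ((P B1).toReal * (∫ ω in B1 ∩ SW, f ω ∂P)) * (P B1).toReal
      = ((P (B1 ∩ SW)).toReal * (∫ ω in B1, f ω ∂P)) * (P B1).toReal := by
    rw [hmul]
  exact mul_right_cancel₀ hb key

/-- Without any external validity assumption, under experimental internal
validity, latent unconfounding, consistency and strict overlap, the bias of the
data-combination formula for the treated arm decomposes as a weighted contrast of the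
conditional distributions of the treated short-term potential outcome across the two groups;
in particular, the bias vanishes whenever these conditional distributions agree. -/
theorem bias_decomposition_without_external_validity
    {Ω : Type*} [MeasurableSpace Ω] (P : Measure Ω) [IsProbabilityMeasure P]
    {𝒳 𝒴 : Type*} [Fintype 𝒳] [Fintype 𝒴]
    [MeasurableSpace 𝒳] [MeasurableSingletonClass 𝒳]
    [MeasurableSpace 𝒴] [MeasurableSingletonClass 𝒴]
    (W G : Ω → Bool) (X : Ω → 𝒳) (Y1 : Bool → Ω → 𝒴) (Y2 : Bool → Ω → ℝ)
    (hW : Measurable W) (hG : Measurable G) (hX : Measurable X)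
    (hY1 : ∀ w, Measurable (Y1 w)) (hY2 : ∀ w, Measurable (Y2 w))
    (hY2int : ∀ w, Integrable (Y2 w) P)
    -- experimental internal validity
    (hIV : ∀ x : 𝒳, 0 < P ({ω | X ω = x} ∩ {ω | G ω = false}) →
      IndepFun W (fun ω => (Y2 true ω, Y2 false ω, Y1 true ω, Y1 false ω))
        (P[|{ω | X ω = x} ∩ {ω | G ω = false}]))
    -- latent unconfounding
    (hLU : ∀ (w : Bool) (y : 𝒴) (x : 𝒳),
      0 < P ({ω | Y1 w ω = y} ∩ {ω | X ω = x} ∩ {ω | G ω = true}) →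
      IndepFun W (Y2 w) (P[|{ω | Y1 w ω = y} ∩ {ω | X ω = x} ∩ {ω | G ω = true}]))
    -- strict overlap: every conditioning event has positive probability
    (hG1 : 0 < P {ω | G ω = true})
    (hOvWXG0 : ∀ x : 𝒳, 0 < P ({ω | W ω = true} ∩ {ω | X ω = x} ∩ {ω | G ω = false}))
    (hOvXG1 : ∀ x : 𝒳, 0 < P ({ω | X ω = x} ∩ {ω | G ω = true}))
    (hOvXG0 : ∀ x : 𝒳, 0 < P ({ω | X ω = x} ∩ {ω | G ω = false}))
    (hOvY1 : ∀ (y : 𝒴) (x : 𝒳),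
      0 < P ({ω | Y1 true ω = y} ∩ {ω | X ω = x} ∩ {ω | G ω = true}))
    (hOvObs : ∀ (y : 𝒴) (x : 𝒳),
      0 < P ({ω | Y1 (W ω) ω = y} ∩ {ω | W ω = true} ∩ {ω | X ω = x} ∩ {ω | G ω = true})) :
    (cE P (Y2 true) {ω | G ω = true} -
      ∑ x : 𝒳, cP P {ω | X ω = x} {ω | G ω = true} *
        ∑ y : 𝒴,
          cP P {ω | Y1 (W ω) ω = y}
            ({ω | W ω = true} ∩ {ω | X ω = x} ∩ {ω | G ω = false}) *
          cE P (fun ω => Y2 (W ω) ω)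
            ({ω | Y1 (W ω) ω = y} ∩ {ω | W ω = true} ∩ {ω | X ω = x} ∩ {ω | G ω = true}))
    =
      ∑ x : 𝒳, cP P {ω | X ω = x} {ω | G ω = true} *
        ∑ y : 𝒴,
          (cP P {ω | Y1 true ω = y} ({ω | X ω = x} ∩ {ω | G ω = true}) -
            cP P {ω | Y1 true ω = y} ({ω | X ω = x} ∩ {ω | G ω = false})) *
          cE P (Y2 true) ({ω | Y1 true ω = y} ∩ {ω | X ω = x} ∩ {ω | G ω = true})
    ∧
    ((∀ (y : 𝒴) (x : 𝒳), 0 < P ({ω | X ω = x} ∩ {ω | G ω = true}) →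
        cP P {ω | Y1 true ω = y} ({ω | X ω = x} ∩ {ω | G ω = true}) =
          cP P {ω | Y1 true ω = y} ({ω | X ω = x} ∩ {ω | G ω = false})) →
      cE P (Y2 true) {ω | G ω = true} =
        ∑ x : 𝒳, cP P {ω | X ω = x} {ω | G ω = true} *
          ∑ y : 𝒴,
            cP P {ω | Y1 (W ω) ω = y}
              ({ω | W ω = true} ∩ {ω | X ω = x} ∩ {ω | G ω = false}) *
            cE P (fun ω => Y2 (W ω) ω)
              ({ω | Y1 (W ω) ω = y} ∩ {ω | W ω = true} ∩ {ω | X ω = x} ∩ {ω | G ω = true})) := by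
  
  classical
  -- measurability of basic events
  have mG1 : MeasurableSet {ω | G ω = true} := hG (measurableSet_singleton true)
  have mG0 : MeasurableSet {ω | G ω = false} := hG (measurableSet_singleton false)
  have mW : MeasurableSet {ω | W ω = true} := hW (measurableSet_singleton true)
  have mX : ∀ x : 𝒳, MeasurableSet {ω | X ω = x} := fun x => hX (measurableSet_singleton x)
  have mY : ∀ y : 𝒴, MeasurableSet {ω | Y1 true ω = y} :=
    fun y => (hY1 true) (measurableSet_singleton y)
  have toReal_ne : ∀ {S : Set Ω}, 0 < P S → (P S).toReal ≠ 0 := by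
    intro S hS
    exact (ENNReal.toReal_pos hS.ne' (measure_ne_top P S)).ne'
  have hbne : (P {ω | G ω = true}).toReal ≠ 0 := toReal_ne hG1
  have hmne : ∀ x, (P ({ω | X ω = x} ∩ {ω | G ω = true})).toReal ≠ 0 :=
    fun x => toReal_ne (hOvXG1 x)
  have hkne : ∀ x, (P ({ω | X ω = x} ∩ {ω | G ω = false})).toReal ≠ 0 :=
    fun x => toReal_ne (hOvXG0 x)
  have hpne : ∀ (y : 𝒴) (x : 𝒳),
      (P ({ω | Y1 true ω = y} ∩ {ω | X ω = x} ∩ {ω | G ω = true})).toReal ≠ 0 :=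
    fun y x => toReal_ne (hOvY1 y x)
  -- F1 : expansion of the unconditional-on-(X,Y1) expectation
  have hI1 : cE P (Y2 true) {ω | G ω = true}
      = (P {ω | G ω = true}).toReal⁻¹ * ∑ x : 𝒳, ∑ y : 𝒴,
          ∫ ω in {ω | Y1 true ω = y} ∩ {ω | X ω = x} ∩ {ω | G ω = true}, Y2 true ω ∂P := by
    simp only [cE]
    rw [cE_eq' P (Y2 true) {ω | G ω = true}]
    congr 1
    rw [integral_partition P X mX mG1 (hY2int true)]
    refine Finset.sum_congr rfl fun x _ => ?_
    rw [integral_partition P (Y1 true) mY ((mX x).inter mG1) (hY2int true)]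
    refine Finset.sum_congr rfl fun y _ => ?_
    rw [← Set.inter_assoc]
  -- F2
  have hF2 : ∀ x : 𝒳, cP P {ω | X ω = x} {ω | G ω = true}
      = (P ({ω | X ω = x} ∩ {ω | G ω = true})).toReal / (P {ω | G ω = true}).toReal := by
    intro x
    simp only [cP]
    rw [cP_eq' P mG1, Set.inter_comm]
  -- F3
  have hF3 : ∀ (y : 𝒴) (x : 𝒳),
      cP P {ω | Y1 true ω = y} ({ω | X ω = x} ∩ {ω | G ω = true})
        = (P ({ω | Y1 true ω = y} ∩ {ω | X ω = x} ∩ {ω | G ω = true})).toReal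
            / (P ({ω | X ω = x} ∩ {ω | G ω = true})).toReal := by
    intro y x
    simp only [cP]
    rw [cP_eq' P ((mX x).inter mG1)]
    have hset : ({ω | X ω = x} ∩ {ω | G ω = true}) ∩ {ω | Y1 true ω = y}
        = {ω | Y1 true ω = y} ∩ {ω | X ω = x} ∩ {ω | G ω = true} := by
      ext ω; simp only [Set.mem_inter_iff, Set.mem_setOf_eq]; tauto
    rw [hset]
  -- F4
  have hF4 : ∀ (y : 𝒴) (x : 𝒳),
      cE P (Y2 true) ({ω | Y1 true ω = y} ∩ {ω | X ω = x} ∩ {ω | G ω = true})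
        = (P ({ω | Y1 true ω = y} ∩ {ω | X ω = x} ∩ {ω | G ω = true})).toReal⁻¹
            * ∫ ω in {ω | Y1 true ω = y} ∩ {ω | X ω = x} ∩ {ω | G ω = true}, Y2 true ω ∂P := by
    intro y x
    simp only [cE]
    exact cE_eq' P (Y2 true) _
  -- F5 : consistency + internal validity for the experimental group
  have hF5 : ∀ (y : 𝒴) (x : 𝒳),
      cP P {ω | Y1 (W ω) ω = y} ({ω | W ω = true} ∩ {ω | X ω = x} ∩ {ω | G ω = false})
        = (P ({ω | Y1 true ω = y} ∩ {ω | X ω = x} ∩ {ω | G ω = false})).toReal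
            / (P ({ω | X ω = x} ∩ {ω | G ω = false})).toReal := by
    intro y x
    have mB : MeasurableSet ({ω | W ω = true} ∩ {ω | X ω = x} ∩ {ω | G ω = false}) :=
      (mW.inter (mX x)).inter mG0
    have mB0 : MeasurableSet ({ω | X ω = x} ∩ {ω | G ω = false}) := (mX x).inter mG0
    simp only [cP]
    rw [cP_eq' P mB]
    have hsetN : {ω | W ω = true} ∩ {ω | X ω = x} ∩ {ω | G ω = false}
          ∩ {ω | Y1 (W ω) ω = y}
        = ({ω | X ω = x} ∩ {ω | G ω = false})
            ∩ ({ω | W ω = true} ∩ {ω | Y1 true ω = y}) := by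
      ext ω
      simp only [Set.mem_inter_iff, Set.mem_setOf_eq]
      constructor
      · rintro ⟨⟨⟨hw, hx⟩, hg⟩, hy⟩
        rw [hw] at hy
        exact ⟨⟨hx, hg⟩, hw, hy⟩
      · rintro ⟨⟨hx, hg⟩, hw, hy⟩
        refine ⟨⟨⟨hw, hx⟩, hg⟩, ?_⟩
        rw [hw]
        exact hy
    have hsetD : {ω | W ω = true} ∩ {ω | X ω = x} ∩ {ω | G ω = false}
        = ({ω | X ω = x} ∩ {ω | G ω = false}) ∩ {ω | W ω = true} := by
      ext ω; simp only [Set.mem_inter_iff, Set.mem_setOf_eq]; tauto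
    have hsetY : ({ω | X ω = x} ∩ {ω | G ω = false}) ∩ {ω | Y1 true ω = y}
        = {ω | Y1 true ω = y} ∩ {ω | X ω = x} ∩ {ω | G ω = false} := by
      ext ω; simp only [Set.mem_inter_iff, Set.mem_setOf_eq]; tauto
    rw [hsetN, hsetD]
    -- independence
    have hiv := hIV x (hOvXG0 x)
    have hs : MeasurableSet {p : ℝ × ℝ × 𝒴 × 𝒴 | p.2.2.1 = y} :=
      (measurable_fst.comp (measurable_snd.comp measurable_snd)) (measurableSet_singleton y)
    have hprod := hiv.measure_inter_preimage_eq_mul {true} {p : ℝ × ℝ × 𝒴 × 𝒴 | p.2.2.1 = y}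
      (measurableSet_singleton true) hs
    have hpre1 : W ⁻¹' {true} = {ω | W ω = true} := rfl
    have hpre2 : (fun ω => (Y2 true ω, Y2 false ω, Y1 true ω, Y1 false ω)) ⁻¹'
        {p : ℝ × ℝ × 𝒴 × 𝒴 | p.2.2.1 = y} = {ω | Y1 true ω = y} := rfl
    rw [hpre1, hpre2, cond_apply mB0, cond_apply mB0, cond_apply mB0] at hprod
    have hprodR := congrArg ENNReal.toReal hprod
    simp only [ENNReal.toReal_mul, ENNReal.toReal_inv] at hprodR
    have hcne : (P (({ω | X ω = x} ∩ {ω | G ω = false}) ∩ {ω | W ω = true})).toReal ≠ 0 := by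
      refine toReal_ne ?_
      have : {ω | W ω = true} ∩ {ω | X ω = x} ∩ {ω | G ω = false}
          = ({ω | X ω = x} ∩ {ω | G ω = false}) ∩ {ω | W ω = true} := hsetD
      rw [← this]
      exact hOvWXG0 x
    have := frac_helper (hkne x) hcne hprodR
    rw [this, hsetY]
  -- F5' : the experimental-group conditional distribution, plain form
  have hF5' : ∀ (y : 𝒴) (x : 𝒳),
      cP P {ω | Y1 true ω = y} ({ω | X ω = x} ∩ {ω | G ω = false})
        = (P ({ω | Y1 true ω = y} ∩ {ω | X ω = x} ∩ {ω | G ω = false})).toReal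
            / (P ({ω | X ω = x} ∩ {ω | G ω = false})).toReal := by
    intro y x
    simp only [cP]
    rw [cP_eq' P ((mX x).inter mG0)]
    have hset : ({ω | X ω = x} ∩ {ω | G ω = false}) ∩ {ω | Y1 true ω = y}
        = {ω | Y1 true ω = y} ∩ {ω | X ω = x} ∩ {ω | G ω = false} := by
      ext ω; simp only [Set.mem_inter_iff, Set.mem_setOf_eq]; tauto
    rw [hset]
  -- F6 : consistency + latent unconfounding for the observational group
  have hF6 : ∀ (y : 𝒴) (x : 𝒳),
      cE P (fun ω => Y2 (W ω) ω)
          ({ω | Y1 (W ω) ω = y} ∩ {ω | W ω = true} ∩ {ω | X ω = x} ∩ {ω | G ω = true})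
        = (P ({ω | Y1 true ω = y} ∩ {ω | X ω = x} ∩ {ω | G ω = true})).toReal⁻¹
            * ∫ ω in {ω | Y1 true ω = y} ∩ {ω | X ω = x} ∩ {ω | G ω = true}, Y2 true ω ∂P := by
    intro y x
    have mB1 : MeasurableSet ({ω | Y1 true ω = y} ∩ {ω | X ω = x} ∩ {ω | G ω = true}) :=
      ((mY y).inter (mX x)).inter mG1
    have hD : {ω | Y1 (W ω) ω = y} ∩ {ω | W ω = true} ∩ {ω | X ω = x} ∩ {ω | G ω = true}
        = {ω | W ω = true} ∩ ({ω | Y1 true ω = y} ∩ {ω | X ω = x} ∩ {ω | G ω = true}) := by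
      ext ω
      simp only [Set.mem_inter_iff, Set.mem_setOf_eq]
      constructor
      · rintro ⟨⟨⟨hy, hw⟩, hx⟩, hg⟩
        rw [hw] at hy
        exact ⟨hw, ⟨hy, hx⟩, hg⟩
      · rintro ⟨hw, ⟨hy, hx⟩, hg⟩
        refine ⟨⟨⟨?_, hw⟩, hx⟩, hg⟩
        rw [hw]
        exact hy
    simp only [cE]
    rw [cE_eq', hD]
    have hcongr : ∫ ω in {ω | W ω = true}
          ∩ ({ω | Y1 true ω = y} ∩ {ω | X ω = x} ∩ {ω | G ω = true}), Y2 (W ω) ω ∂P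
        = ∫ ω in {ω | W ω = true}
          ∩ ({ω | Y1 true ω = y} ∩ {ω | X ω = x} ∩ {ω | G ω = true}), Y2 true ω ∂P := by
      refine setIntegral_congr_fun (mW.inter mB1) ?_
      rintro ω ⟨hw, _⟩
      simp only
      rw [hw]
    rw [hcongr]
    have hWpos : P (({ω | Y1 true ω = y} ∩ {ω | X ω = x} ∩ {ω | G ω = true})
        ∩ {ω | W ω = true}) ≠ 0 := by
      have : {ω | Y1 (W ω) ω = y} ∩ {ω | W ω = true} ∩ {ω | X ω = x} ∩ {ω | G ω = true}
          = ({ω | Y1 true ω = y} ∩ {ω | X ω = x} ∩ {ω | G ω = true}) ∩ {ω | W ω = true} := by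
        rw [hD, Set.inter_comm]
      rw [← this]
      exact (hOvObs y x).ne'
    have hmain := cond_setIntegral_indep P mB1 (hOvY1 y x).ne' hW (hY2 true) hWpos
      (hLU true y x (hOvY1 y x))
    rw [← div_eq_inv_mul, ← div_eq_inv_mul]
    exact hmain
  -- assemble
  have hbias : (cE P (Y2 true) {ω | G ω = true} -
      ∑ x : 𝒳, cP P {ω | X ω = x} {ω | G ω = true} *
        ∑ y : 𝒴,
          cP P {ω | Y1 (W ω) ω = y}
            ({ω | W ω = true} ∩ {ω | X ω = x} ∩ {ω | G ω = false}) *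
          cE P (fun ω => Y2 (W ω) ω)
            ({ω | Y1 (W ω) ω = y} ∩ {ω | W ω = true} ∩ {ω | X ω = x} ∩ {ω | G ω = true}))
      =
      ∑ x : 𝒳, cP P {ω | X ω = x} {ω | G ω = true} *
        ∑ y : 𝒴,
          (cP P {ω | Y1 true ω = y} ({ω | X ω = x} ∩ {ω | G ω = true}) -
            cP P {ω | Y1 true ω = y} ({ω | X ω = x} ∩ {ω | G ω = false})) *
          cE P (Y2 true) ({ω | Y1 true ω = y} ∩ {ω | X ω = x} ∩ {ω | G ω = true}) := by
    simp only [hI1, hF2, hF3, hF4, hF5, hF5', hF6]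
    rw [Finset.mul_sum]
    rw [← Finset.sum_sub_distrib]
    refine Finset.sum_congr rfl fun x _ => ?_
    rw [Finset.mul_sum, Finset.mul_sum, Finset.mul_sum, ← Finset.sum_sub_distrib]
    refine Finset.sum_congr rfl fun y _ => ?_
    have h1 := hbne
    have h2 := hmne x
    have h3 := hkne x
    have h4 := hpne y x
    field_simp
  refine ⟨hbias, ?_⟩
  intro h
  have hz : ∑ x : 𝒳, cP P {ω | X ω = x} {ω | G ω = true} *
        ∑ y : 𝒴,
          (cP P {ω | Y1 true ω = y} ({ω | X ω = x} ∩ {ω | G ω = true}) -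
            cP P {ω | Y1 true ω = y} ({ω | X ω = x} ∩ {ω | G ω = false})) *
          cE P (Y2 true) ({ω | Y1 true ω = y} ∩ {ω | X ω = x} ∩ {ω | G ω = true}) = 0 := by
    refine Finset.sum_eq_zero fun x _ => ?_
    rw [Finset.sum_eq_zero, mul_zero]
    intro y _
    rw [h y x (hOvXG1 x), sub_self, zero_mul]
  rw [hz] at hbias
  linarith [hbias]
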